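/- C_max is monotone under maximally incoherent operations: if Λ is a completely positive trace-preserving map on d×d complex matrices such that Λ(δ) is incoherent for every incoherent state δ, then for every state ρ one has C_max(Λ(ρ)) ≤ C_max(ρ). -/

import Mathlib

open scoped Matrix ComplexOrder

namespace OneShot

variable {ι κ : Type*} [Fintype ι] [DecidableEq ι] [Fintype κ] [DecidableEq κ]

/-- A quantum state: a positive semidefinite matrix with unit trace. -/
def IsState (ρ : Matrix ι ι ℂ) : Prop := ρ.PosSemidef ∧ ρ.trace = 1

/-- An incoherent state: a state that is diagonal in the computational basis. -/
def IsIncoherent (ρ : Matrix ι ι ℂ) : Prop := IsState ρ ∧ ρ.IsDiag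

/-- The completely dephasing channel `Δ`. -/
def dephase (ρ : Matrix ι ι ℂ) : Matrix ι ι ℂ := Matrix.diagonal fun i => ρ i i

/-- The max-relative entropy of coherence
`C_max(ρ) = min_{δ ∈ 𝓘} D_max(ρ‖δ) = log₂ min {λ ≥ 0 | ∃ δ ∈ 𝓘, ρ ≤ λ δ}`. -/
noncomputable def Cmax (ρ : Matrix ι ι ℂ) : ℝ :=
  Real.logb 2 (sInf {l : ℝ | 0 ≤ l ∧ ∃ δ, IsIncoherent δ ∧ (l • δ - ρ).PosSemidef})

/-- `C_{Δ,max}(ρ) = log₂ min {λ ≥ 0 | ρ ≤ λ Δ(ρ)}`. -/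
noncomputable def CDmax (ρ : Matrix ι ι ℂ) : ℝ :=
  Real.logb 2 (sInf {l : ℝ | 0 ≤ l ∧ (l • dephase ρ - ρ).PosSemidef})

/-- Complete positivity of a linear map on matrices. -/
def CompletelyPositive (Λ : Matrix ι ι ℂ →ₗ[ℂ] Matrix κ κ ℂ) : Prop :=
  ∀ (k : ℕ) (M : Matrix (Fin k × ι) (Fin k × ι) ℂ), M.PosSemidef →
    (Matrix.of fun p q : Fin k × κ =>
      Λ (Matrix.of fun x y => M (p.1, x) (q.1, y)) p.2 q.2).PosSemidef

/-- Trace preservation. -/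
def TracePreserving (Λ : Matrix ι ι ℂ →ₗ[ℂ] Matrix κ κ ℂ) : Prop :=
  ∀ A, (Λ A).trace = A.trace

/-- A maximally incoherent operation (MIO): a CPTP map sending every incoherent state
to an incoherent state. -/
def IsMIO (Λ : Matrix ι ι ℂ →ₗ[ℂ] Matrix κ κ ℂ) : Prop :=
  CompletelyPositive Λ ∧ TracePreserving Λ ∧ ∀ δ, IsIncoherent δ → IsIncoherent (Λ δ)

/-- A dephasing-covariant incoherent operation (DIO): a CPTP map commuting with `Δ`. -/
def IsDIO (Λ : Matrix ι ι ℂ →ₗ[ℂ] Matrix ι ι ℂ) : Prop :=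
  CompletelyPositive Λ ∧ TracePreserving Λ ∧ ∀ ρ, Λ (dephase ρ) = dephase (Λ ρ)

/-- An incoherent-preserving (Kraus) operator: `K δ Kᴴ` is a nonnegative multiple of an
incoherent state, for every incoherent state `δ`. -/
def IncoherentPreserving (K : Matrix κ ι ℂ) : Prop :=
  ∀ δ : Matrix ι ι ℂ, IsIncoherent δ →
    ∃ c : ℝ, 0 ≤ c ∧ ∃ δ' : Matrix κ κ ℂ, IsIncoherent δ' ∧ K * δ * Kᴴ = (c : ℂ) • δ'

/-- An incoherent operation (IO). -/
def IsIO (Λ : Matrix ι ι ℂ →ₗ[ℂ] Matrix κ κ ℂ) : Prop :=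
  ∃ (N : ℕ) (K : Fin N → Matrix κ ι ℂ),
    (∀ n, IncoherentPreserving (K n)) ∧ (∑ n, (K n)ᴴ * K n = 1) ∧
    ∀ ρ, Λ ρ = ∑ n, K n * ρ * (K n)ᴴ

/-- A strictly incoherent operation (SIO). -/
def IsSIO (Λ : Matrix ι ι ℂ →ₗ[ℂ] Matrix κ κ ℂ) : Prop :=
  ∃ (N : ℕ) (K : Fin N → Matrix κ ι ℂ),
    (∀ n, IncoherentPreserving (K n)) ∧ (∀ n, IncoherentPreserving (K n)ᴴ) ∧
    (∑ n, (K n)ᴴ * K n = 1) ∧ ∀ ρ, Λ ρ = ∑ n, K n * ρ * (K n)ᴴ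

/-- The outer product `|ψ⟩⟨ψ|`. -/
def outer (ψ : ι → ℂ) : Matrix ι ι ℂ := Matrix.of fun i j => ψ i * star (ψ j)

/-- `T ψ` is the number of nonzero computational-basis coefficients of `ψ`. -/
noncomputable def T (ψ : ι → ℂ) : ℕ := (Finset.univ.filter fun i => ψ i ≠ 0).card

/-- A finite pure-state decomposition `ρ = Σ_j p_j |ψ_j⟩⟨ψ_j|`. -/
def IsDecomposition (ρ : Matrix ι ι ℂ) (n : ℕ) (p : Fin n → ℝ) (ψ : Fin n → ι → ℂ) : Prop :=
  (∀ j, 0 < p j) ∧ (∑ j, p j = 1) ∧ (∀ j, ∑ i, Complex.normSq (ψ j i) = 1) ∧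
    ρ = ∑ j, p j • outer (ψ j)

/-- `C_0(ρ) = min over decompositions of max_j log₂ T(ψ_j)`. -/
noncomputable def C0 (ρ : Matrix ι ι ℂ) : ℝ :=
  sInf { r | ∃ n p ψ, IsDecomposition ρ n p ψ ∧
    r = Real.logb 2 (↑(Finset.univ.sup fun j => T (ψ j)) : ℝ) }

/-- Matrix square root of a positive semidefinite matrix (junk value `0` elsewhere). -/
noncomputable def msqrt (A : Matrix ι ι ℂ) : Matrix ι ι ℂ :=
  letI := Classical.propDecidable A.PosSemidef
  if h : A.PosSemidef then
    (h.1.eigenvectorUnitary : Matrix ι ι ℂ) * Matrix.diagonal ((↑) ∘ (√·) ∘ h.1.eigenvalues) *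
      (star (h.1.eigenvectorUnitary : Matrix ι ι ℂ))
  else 0

/-- Uhlmann fidelity `F(ρ,σ) = (Tr √(√ρ σ √ρ))²`. -/
noncomputable def Fid (ρ σ : Matrix ι ι ℂ) : ℝ :=
  ((msqrt (msqrt ρ * σ * msqrt ρ)).trace.re) ^ 2

/-- Smoothed `C_max`. -/
noncomputable def Cmaxeps (ρ : Matrix ι ι ℂ) (ε : ℝ) : ℝ :=
  sInf { r | ∃ ρ', IsState ρ' ∧ 1 - ε ≤ Fid ρ ρ' ∧ r = Cmax ρ' }

/-- Smoothed `C_{Δ,max}`. -/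
noncomputable def CDmaxeps (ρ : Matrix ι ι ℂ) (ε : ℝ) : ℝ :=
  sInf { r | ∃ ρ', IsState ρ' ∧ 1 - ε ≤ Fid ρ ρ' ∧ r = CDmax ρ' }

/-- Smoothed `C_0`. -/
noncomputable def C0eps (ρ : Matrix ι ι ℂ) (ε : ℝ) : ℝ :=
  sInf { r | ∃ ρ', IsState ρ' ∧ 1 - ε ≤ Fid ρ ρ' ∧ r = C0 ρ' }

/-- The maximally coherent state `Ψ_M = |Ψ_M⟩⟨Ψ_M|` of dimension `M`. -/
noncomputable def PsiM (M : ℕ) : Matrix (Fin M) (Fin M) ℂ := Matrix.of fun _ _ => (1 : ℂ) / M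

/-- One-shot coherence cost under MIO. -/
noncomputable def CMIOeps (ρ : Matrix ι ι ℂ) (ε : ℝ) : ℝ :=
  sInf { r | ∃ M : ℕ, 1 ≤ M ∧ r = Real.logb 2 M ∧
    ∃ Λ : Matrix (Fin M) (Fin M) ℂ →ₗ[ℂ] Matrix ι ι ℂ, IsMIO Λ ∧ 1 - ε ≤ Fid ρ (Λ (PsiM M)) }

/-- One-shot coherence cost under DIO. -/
noncomputable def CDIOeps (ρ : Matrix ι ι ℂ) (ε : ℝ) : ℝ :=
  sInf { r | ∃ M : ℕ, 1 ≤ M ∧ r = Real.logb 2 M ∧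
    ∃ Λ : Matrix (Fin M) (Fin M) ℂ →ₗ[ℂ] Matrix ι ι ℂ,
      CompletelyPositive Λ ∧ TracePreserving Λ ∧ (∀ ω, Λ (dephase ω) = dephase (Λ ω)) ∧
      1 - ε ≤ Fid ρ (Λ (PsiM M)) }

/-- One-shot coherence cost under IO. -/
noncomputable def CIOeps (ρ : Matrix ι ι ℂ) (ε : ℝ) : ℝ :=
  sInf { r | ∃ M : ℕ, 1 ≤ M ∧ r = Real.logb 2 M ∧
    ∃ Λ : Matrix (Fin M) (Fin M) ℂ →ₗ[ℂ] Matrix ι ι ℂ, IsIO Λ ∧ 1 - ε ≤ Fid ρ (Λ (PsiM M)) }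

/-- One-shot coherence cost under SIO. -/
noncomputable def CSIOeps (ρ : Matrix ι ι ℂ) (ε : ℝ) : ℝ :=
  sInf { r | ∃ M : ℕ, 1 ≤ M ∧ r = Real.logb 2 M ∧
    ∃ Λ : Matrix (Fin M) (Fin M) ℂ →ₗ[ℂ] Matrix ι ι ℂ, IsSIO Λ ∧ 1 - ε ≤ Fid ρ (Λ (PsiM M)) }

/-- Matrix logarithm (base 2) via the spectral decomposition, with `log₂ 0 = 0` junk
convention on the kernel, and junk value `0` on non-Hermitian matrices. -/
noncomputable def mlog2 (A : Matrix ι ι ℂ) : Matrix ι ι ℂ :=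
  letI := Classical.propDecidable A.IsHermitian
  if h : A.IsHermitian then
    (h.eigenvectorUnitary : Matrix ι ι ℂ) *
      Matrix.diagonal (fun i => (Real.logb 2 (h.eigenvalues i) : ℂ)) *
      (h.eigenvectorUnitary : Matrix ι ι ℂ)ᴴ
  else 0

/-- The relative entropy of coherence `C_r(ρ) = min_{δ ∈ 𝓘} S(ρ‖δ)`, where the minimum
is (equivalently) restricted to those `δ` whose support contains the support of `ρ`,
on which `S(ρ‖δ) = Tr[ρ (log₂ ρ − log₂ δ)]` is finite. -/
noncomputable def Cr (ρ : Matrix ι ι ℂ) : ℝ :=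
  sInf { r | ∃ δ, IsIncoherent δ ∧ (∀ v : ι → ℂ, δ.mulVec v = 0 → ρ.mulVec v = 0) ∧
    r = ((ρ * (mlog2 ρ - mlog2 δ)).trace).re }

/-- Von Neumann entropy (base 2). -/
noncomputable def vN (σ : Matrix ι ι ℂ) : ℝ := -((σ * mlog2 σ).trace.re)

/-- The coherence of formation. -/
noncomputable def Cf (ρ : Matrix ι ι ℂ) : ℝ :=
  sInf { r | ∃ n p ψ, IsDecomposition ρ n p ψ ∧
    r = ∑ j, p j * vN (dephase (outer (ψ j))) }

/-- The set `A_ρ = { (1/t)[(1+t)Δ(ρ) − ρ] : t > 0, (1+t)Δ(ρ) − ρ ≥ 0 }`. -/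
def Aset (ρ : Matrix ι ι ℂ) : Set (Matrix ι ι ℂ) :=
  { σ | ∃ t : ℝ, 0 < t ∧ ((1 + t) • dephase ρ - ρ).PosSemidef ∧
      σ = t⁻¹ • ((1 + t) • dephase ρ - ρ) }

/-- The `n`-fold tensor power `ρ^{⊗ n}`. -/
def tpow (ρ : Matrix ι ι ℂ) (n : ℕ) : Matrix (Fin n → ι) (Fin n → ι) ℂ :=
  Matrix.of fun i j => ∏ t, ρ (i t) (j t)


section Aux

variable {n : Type*} [Fintype n] [DecidableEq n]

private lemma real_smul_mat (l : ℝ) (M : Matrix n n ℂ) : l • M = (l : ℂ) • M := by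
  ext i j
  simp [Complex.real_smul]

private lemma psd_trace_re_nonneg {A : Matrix n n ℂ} (hA : A.PosSemidef) :
    0 ≤ A.trace.re := by
  have hdiag : ∀ i, 0 ≤ (A i i).re := by
    intro i
    have := hA.re_dotProduct_nonneg (Pi.single i 1)
    simpa [dotProduct, Matrix.mulVec, Pi.single_apply, mul_comm] using this
  have : A.trace.re = ∑ i, (A i i).re := by
    simp [Matrix.trace, Matrix.diag, Complex.re_sum]
  rw [this]
  exact Finset.sum_nonneg fun i _ => hdiag i

private lemma trace_re_eq_sum_eig {A : Matrix n n ℂ} (hA : A.IsHermitian) :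
    A.trace.re = ∑ i, hA.eigenvalues i := by
  have hU : (star (hA.eigenvectorUnitary : Matrix n n ℂ)) *
      (hA.eigenvectorUnitary : Matrix n n ℂ) = 1 :=
    (Matrix.mem_unitaryGroup_iff').mp (hA.eigenvectorUnitary).2
  conv_lhs => rw [hA.spectral_theorem]
  rw [Unitary.conjStarAlgAut_apply, Matrix.trace_mul_cycle, hU, one_mul, Matrix.trace_diagonal]
  simp [Complex.re_sum]

private lemma ofReal_eq (x : ℝ) : (RCLike.ofReal x : ℂ) = (x : ℂ) := rfl

private lemma one_sub_psd {ρ : Matrix n n ℂ} (h : ρ.PosSemidef) (ht : ρ.trace = 1) :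
    ((1 : Matrix n n ℂ) - ρ).PosSemidef := by
  have hH := h.isHermitian
  have hUu : (hH.eigenvectorUnitary : Matrix n n ℂ) *
      star (hH.eigenvectorUnitary : Matrix n n ℂ) = 1 :=
    (Matrix.mem_unitaryGroup_iff).mp (hH.eigenvectorUnitary).2
  have hsum : ∑ i, hH.eigenvalues i = 1 := by
    have := trace_re_eq_sum_eig hH
    rw [ht] at this
    simpa using this.symm
  have heig_le : ∀ i, hH.eigenvalues i ≤ 1 := by
    intro i
    calc hH.eigenvalues i ≤ ∑ j, hH.eigenvalues j :=
          Finset.single_le_sum (fun j _ => h.eigenvalues_nonneg j) (Finset.mem_univ i)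
      _ = 1 := hsum
  set U : Matrix n n ℂ := (hH.eigenvectorUnitary : Matrix n n ℂ) with hUdef
  set D : Matrix n n ℂ := Matrix.diagonal (RCLike.ofReal ∘ hH.eigenvalues) with hDdef
  have key : (1 : Matrix n n ℂ) - ρ = U * ((1 : Matrix n n ℂ) - D) * star U := by
    rw [Matrix.mul_sub, Matrix.sub_mul, Matrix.mul_one, hUu]
    conv_lhs => rw [hH.spectral_theorem, Unitary.conjStarAlgAut_apply]
  have hposD : ((1 : Matrix n n ℂ) - D).PosSemidef := by
    have hDeq : (1 : Matrix n n ℂ) - D =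
        Matrix.diagonal (fun i => ((1 - hH.eigenvalues i : ℝ) : ℂ)) := by
      ext i j
      by_cases hij : i = j
      · subst hij
        rw [Matrix.sub_apply, Matrix.one_apply_eq, hDdef, Matrix.diagonal_apply_eq,
          Matrix.diagonal_apply_eq, Function.comp_apply, ofReal_eq]
        push_cast
        ring
      · rw [Matrix.sub_apply, Matrix.one_apply_ne hij, hDdef,
          Matrix.diagonal_apply_ne _ hij, Matrix.diagonal_apply_ne _ hij, sub_zero]
    rw [hDeq]
    refine Matrix.PosSemidef.diagonal fun i => ?_
    simp only [Pi.zero_apply]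
    rw [Complex.zero_le_real]
    linarith [heig_le i]
  rw [key, Matrix.star_eq_conjTranspose]
  exact hposD.mul_mul_conjTranspose_same U

end Aux

private def sndEquiv (d : ℕ) : Fin 1 × Fin d ≃ Fin d where
  toFun p := p.2
  invFun i := (0, i)
  left_inv p := Prod.ext (Subsingleton.elim _ _) rfl
  right_inv i := rfl

private lemma cp_psd {d : ℕ} (Λ : Matrix (Fin d) (Fin d) ℂ →ₗ[ℂ] Matrix (Fin d) (Fin d) ℂ)
    (hCP : CompletelyPositive Λ) {A : Matrix (Fin d) (Fin d) ℂ} (hA : A.PosSemidef) :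
    (Λ A).PosSemidef := by
  let e := sndEquiv d
  have hM : (A.submatrix e e).PosSemidef := (Matrix.posSemidef_submatrix_equiv e).mpr hA
  have h := hCP 1 (A.submatrix e e) hM
  have h2 : (Matrix.of fun p q : Fin 1 × Fin d =>
      Λ (Matrix.of fun x y => (A.submatrix e e) (p.1, x) (q.1, y)) p.2 q.2)
      = (Λ A).submatrix e e := rfl
  rw [h2] at h
  exact (Matrix.posSemidef_submatrix_equiv e).mp h

private lemma one_le_of_mem {n : Type*} [Fintype n] [DecidableEq n]
    {σ δ : Matrix n n ℂ} (hσ : σ.trace = 1) (hδ : IsIncoherent δ) {l : ℝ}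
    (hpsd : (l • δ - σ).PosSemidef) : 1 ≤ l := by
  have h0 := psd_trace_re_nonneg hpsd
  rw [Matrix.trace_sub, Matrix.trace_smul, hσ, hδ.1.2] at h0
  have : (l • (1 : ℂ) - 1).re = l - 1 := by
    simp [Complex.real_smul]
  rw [this] at h0
  linarith

/-- `C_max` is monotone under maximally incoherent operations. -/
theorem Cmax_MIO_monotone {d : ℕ}
    (Λ : Matrix (Fin d) (Fin d) ℂ →ₗ[ℂ] Matrix (Fin d) (Fin d) ℂ)
    (hCP : CompletelyPositive Λ) (hTP : TracePreserving Λ)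
    (hinc : ∀ δ, IsIncoherent δ → IsIncoherent (Λ δ))
    (ρ : Matrix (Fin d) (Fin d) ℂ) (hρ : IsState ρ) :
    Cmax (Λ ρ) ≤ Cmax ρ := by
  unfold Cmax
  have hρtr := hρ.2
  have hd : d ≠ 0 := by
    intro h
    subst h
    have : ρ.trace = 0 := by simp [Matrix.trace]
    rw [hρtr] at this
    exact one_ne_zero this
  have hΛρtr : (Λ ρ).trace = 1 := by rw [hTP ρ, hρtr]
  set S1 := {l : ℝ | 0 ≤ l ∧ ∃ δ, IsIncoherent δ ∧ (l • δ - Λ ρ).PosSemidef} with hS1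
  set S2 := {l : ℝ | 0 ≤ l ∧ ∃ δ, IsIncoherent δ ∧ (l • δ - ρ).PosSemidef} with hS2
  have hsub : S2 ⊆ S1 := by
    rintro l ⟨hl, δ, hδ, hpsd⟩
    refine ⟨hl, Λ δ, hinc δ hδ, ?_⟩
    have heq : l • Λ δ - Λ ρ = Λ (l • δ - ρ) := by
      rw [map_sub, real_smul_mat, real_smul_mat, map_smul]
    rw [heq]
    exact cp_psd Λ hCP hpsd
  have hδ0 : IsIncoherent (((d : ℂ))⁻¹ • (1 : Matrix (Fin d) (Fin d) ℂ)) := by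
    have hdiag : ((d : ℂ))⁻¹ • (1 : Matrix (Fin d) (Fin d) ℂ) =
        Matrix.diagonal (fun _ => ((d : ℂ))⁻¹) := by
      ext i j
      by_cases h : i = j <;> simp [h, Matrix.one_apply, Matrix.diagonal_apply]
    refine ⟨⟨?_, ?_⟩, ?_⟩
    · rw [hdiag]
      refine Matrix.PosSemidef.diagonal fun i => ?_
      simp only [Pi.zero_apply]
      have : ((d : ℂ))⁻¹ = ((((d : ℝ))⁻¹ : ℝ) : ℂ) := by push_cast; ring
      rw [this, Complex.zero_le_real]
      positivity
    · rw [Matrix.trace_smul, Matrix.trace_one]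
      simp only [smul_eq_mul, Fintype.card_fin]
      exact inv_mul_cancel₀ (Nat.cast_ne_zero.mpr hd)
    · rw [hdiag]
      exact Matrix.isDiag_diagonal _
  have hmem : (d : ℝ) ∈ S2 := by
    refine ⟨by positivity, ((d : ℂ))⁻¹ • (1 : Matrix (Fin d) (Fin d) ℂ), hδ0, ?_⟩
    have : (d : ℝ) • (((d : ℂ))⁻¹ • (1 : Matrix (Fin d) (Fin d) ℂ)) =
        (1 : Matrix (Fin d) (Fin d) ℂ) := by
      rw [real_smul_mat, smul_smul]
      push_cast
      rw [mul_inv_cancel₀ (Nat.cast_ne_zero.mpr hd), one_smul]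
    rw [this]
    exact one_sub_psd hρ.1 hρtr
  have hne2 : S2.Nonempty := ⟨_, hmem⟩
  have hbdd : BddBelow S1 := ⟨1, fun l ⟨_, δ, hδ, hpsd⟩ => one_le_of_mem hΛρtr hδ hpsd⟩
  have hmono : sInf S1 ≤ sInf S2 := csInf_le_csInf hbdd hne2 hsub
  have hpos : (1 : ℝ) ≤ sInf S1 :=
    le_csInf (hne2.mono hsub) fun l ⟨_, δ, hδ, hpsd⟩ => one_le_of_mem hΛρtr hδ hpsd
  exact Real.logb_le_logb_of_le one_lt_two (by linarith) hmono


end OneShot
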